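/- arXiv:2403.13041 — 2 statements merged into one kernel-verified Lean document; each statement's English description precedes it below -/
import Mathlib

section
/- Let J = {i₁,…,i_B} consist of B indices sampled independently and uniformly from {1,…,n}, and let S, S′ be datasets with d₁₂(S,S′) ≤ τ. Then for any integer m with 1 ≤ m ≤ n−1, P(∑_{i∈J} ‖Sᵢ − Sᵢ′‖₂ ≤ Bτ/m) ≥ (1 − (m−1)/n)^B. -/
open Classical in
/-- Let `J = (i₁,…,i_B)` consist of `B` indices sampled independently and
uniformly (with replacement) from `{1,…,n}`, and let `S, S′` be datasets with
`d₁₂(S,S′) ≤ τ`. Then for any integer `m` with `1 ≤ m ≤ n−1`, the probability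
(counting uniformly over all `n^B` index tuples) that
`∑_{i∈J} ‖Sᵢ − Sᵢ′‖₂ ≤ Bτ/m` is at least `(1 − (m−1)/n)^B`. -/
theorem subsample_concentration {n d B : ℕ} (hn : 0 < n)
    (S S' : Fin n → EuclideanSpace ℝ (Fin d))
    (τ : ℝ) (hτ : 0 < τ) (m : ℕ) (hm1 : 1 ≤ m) (hm2 : m ≤ n - 1)
    (hd12 : ∑ i, ‖S i - S' i‖ ≤ τ) :
    (1 - ((m : ℝ) - 1) / n) ^ B ≤
      ((Finset.univ.filter fun J : Fin B → Fin n =>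
          (∑ b, ‖S (J b) - S' (J b)‖) ≤ B * τ / m).card : ℝ) / (n : ℝ) ^ B := by
  classical
  have hmR : (0:ℝ) < m := by exact_mod_cast hm1
  have hτm : 0 < τ / m := div_pos hτ hmR
  set T : Finset (Fin n) := Finset.univ.filter (fun i => τ / m < ‖S i - S' i‖) with hTdef
  have hTτ : ∑ i ∈ T, ‖S i - S' i‖ ≤ τ :=
    le_trans (Finset.sum_le_sum_of_subset_of_nonneg (Finset.subset_univ T)
      (fun i _ _ => norm_nonneg _)) hd12
  have hTcard : T.card < m := by
    rcases T.eq_empty_or_nonempty with h | h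
    · rw [h, Finset.card_empty]; exact hm1
    · have h1 : (T.card : ℝ) * (τ / m) < ∑ i ∈ T, ‖S i - S' i‖ := by
        have := Finset.sum_lt_sum_of_nonempty h (f := fun _ => τ / m)
          (g := fun i => ‖S i - S' i‖) (fun i hi => (Finset.mem_filter.mp hi).2)
        simpa [Finset.sum_const, nsmul_eq_mul] using this
      have h2 : (T.card : ℝ) * (τ / m) < (m:ℝ) * (τ / m) := by
        calc (T.card:ℝ) * (τ/m) < _ := h1
        _ ≤ τ := hTτ
        _ = m * (τ/m) := by field_simp
      exact_mod_cast lt_of_mul_lt_mul_right h2 (le_of_lt hτm)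
  set A : Finset (Fin n) := Tᶜ with hA
  have hAmem : ∀ i ∈ A, ‖S i - S' i‖ ≤ τ / m := by
    intro i hi
    have := Finset.mem_compl.mp hi
    simpa [hTdef, not_lt] using this
  have hsub : Fintype.piFinset (fun _ : Fin B => A) ⊆
      Finset.univ.filter fun J : Fin B → Fin n =>
        (∑ b, ‖S (J b) - S' (J b)‖) ≤ B * τ / m := by
    intro J hJ
    simp only [Finset.mem_filter, Finset.mem_univ, true_and]
    have hb : ∀ b, ‖S (J b) - S' (J b)‖ ≤ τ / m := fun b =>
      hAmem _ (Fintype.mem_piFinset.mp hJ b)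
    calc ∑ b, ‖S (J b) - S' (J b)‖ ≤ ∑ _b : Fin B, τ / m :=
          Finset.sum_le_sum (fun b _ => hb b)
      _ = B * (τ/m) := by simp [Finset.sum_const, nsmul_eq_mul]
      _ = B * τ / m := by ring
  have hcard : A.card ^ B ≤ (Finset.univ.filter fun J : Fin B → Fin n =>
      (∑ b, ‖S (J b) - S' (J b)‖) ≤ B * τ / m).card := by
    have := Finset.card_le_card hsub
    simpa [Fintype.card_piFinset, Finset.prod_const] using this
  have hnR : (0:ℝ) < n := by exact_mod_cast hn
  have hpow : (0:ℝ) < (n:ℝ)^B := pow_pos hnR B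
  rw [le_div_iff₀ hpow, ← mul_pow]
  have hbase : (1 - ((m:ℝ)-1)/n) * n = (n:ℝ) - ((m:ℝ)-1) := by field_simp
  rw [hbase]
  have hmn : (m:ℝ) ≤ n := by
    have : m ≤ n := le_trans hm2 (Nat.sub_le n 1)
    exact_mod_cast this
  have hbnn : (0:ℝ) ≤ (n:ℝ) - ((m:ℝ)-1) := by linarith
  have hAcard : (n:ℝ) - ((m:ℝ)-1) ≤ (A.card : ℝ) := by
    have h1 : A.card = n - T.card := by
      simp [hA, Finset.card_compl]
    have hTn : T.card ≤ n := le_trans (Finset.card_le_univ T) (by simp)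
    have h1' : (A.card : ℝ) = (n:ℝ) - T.card := by
      rw [h1, Nat.cast_sub hTn]
    have h2 : (T.card:ℝ) + 1 ≤ (m:ℝ) := by exact_mod_cast hTcard
    rw [h1']; linarith
  calc ((n:ℝ) - ((m:ℝ)-1)) ^ B ≤ (A.card : ℝ) ^ B := pow_le_pow_left₀ hbnn hAcard B
    _ ≤ _ := by exact_mod_cast hcard
end

section
/- Covariance perturbation bound: let S = {x₁,…,xₙ} and S̃ = {x₁,…,x_{n−1}, xₙ′} be two datasets of points in the unit Euclidean ball of ℝ^d with empirical covariance matrices Σ and Σ̃ (computed about the respective empirical means). Then ‖Σ̃ − Σ‖_F ≤ 2(3n+2)/(n(n−1)). -/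
/-- Empirical covariance matrix of a dataset of `n` points in `ℝ^d`,
computed about the empirical mean, with normalization `1/(n−1)`. -/
noncomputable def empCov {n d : ℕ} (x : Fin n → EuclideanSpace ℝ (Fin d)) :
    Matrix (Fin d) (Fin d) ℝ :=
  fun j k =>
    (1 / ((n : ℝ) - 1)) *
      ∑ i, (x i j - (∑ l, x l j) / (n : ℝ)) * (x i k - (∑ l, x l k) / (n : ℝ))

section aux

/-- Rank-one "matrix" as an element of a Euclidean space. -/
noncomputable def rankOneE {d : ℕ} (u v : EuclideanSpace ℝ (Fin d)) :
    EuclideanSpace ℝ (Fin d × Fin d) :=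
  WithLp.toLp 2 (fun p : Fin d × Fin d => u p.1 * v p.2)

lemma rankOneE_apply {d : ℕ} (u v : EuclideanSpace ℝ (Fin d)) (p : Fin d × Fin d) :
    rankOneE u v p = u p.1 * v p.2 := rfl

lemma rankOneE_norm {d : ℕ} (u v : EuclideanSpace ℝ (Fin d)) :
    ‖rankOneE u v‖ = ‖u‖ * ‖v‖ := by
  rw [EuclideanSpace.norm_eq (rankOneE u v), EuclideanSpace.norm_eq u,
    EuclideanSpace.norm_eq v, ← Real.sqrt_mul (by positivity)]
  congr 1
  have h : ∀ p : Fin d × Fin d, ‖rankOneE u v p‖ ^ 2 = ‖u p.1‖ ^ 2 * ‖v p.2‖ ^ 2 := by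
    intro p
    rw [rankOneE_apply]
    simp [Real.norm_eq_abs, abs_mul, mul_pow]
  simp_rw [h]
  rw [Fintype.sum_prod_type]
  dsimp only
  rw [← Finset.sum_mul_sum]

lemma pilp_sum_apply {d : ℕ} {n : ℕ} (f : Fin n → EuclideanSpace ℝ (Fin d)) (j : Fin d) :
    (∑ i, f i) j = ∑ i, f i j := by
  classical
  induction (Finset.univ : Finset (Fin n)) using Finset.induction with
  | empty => simp [PiLp.zero_apply]
  | insert _ _ h ih => simp [Finset.sum_insert h, PiLp.add_apply, ih]

lemma mean_norm_le {n d : ℕ} (hn : (0 : ℝ) < n)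
    (y : Fin n → EuclideanSpace ℝ (Fin d)) (hy : ∀ i, ‖y i‖ ≤ 1)
    (z : EuclideanSpace ℝ (Fin d)) (hz : z = ((n : ℝ))⁻¹ • ∑ i, y i) :
    ‖z‖ ≤ 1 := by
  have h1 : ‖∑ i, y i‖ ≤ (n : ℝ) := by
    refine le_trans (norm_sum_le _ _) ?_
    calc (∑ i, ‖y i‖) ≤ ∑ _i : Fin n, (1 : ℝ) := Finset.sum_le_sum fun i _ => hy i
      _ = (n : ℝ) := by simp
  rw [hz, norm_smul, Real.norm_eq_abs, abs_of_pos (by positivity)]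
  rw [inv_mul_le_iff₀ hn]
  simpa using h1

lemma centered_sum {n : ℕ} (hn : (n : ℝ) ≠ 0) (f g : Fin n → ℝ) :
    ∑ i, (f i - (∑ l, f l) / (n : ℝ)) * (g i - (∑ l, g l) / (n : ℝ))
      = (∑ i, f i * g i) - (∑ l, f l) * (∑ l, g l) / (n : ℝ) := by
  set S := ∑ l, f l with hS
  set T := ∑ l, g l with hT
  have expand : ∀ i, (f i - S / n) * (g i - T / n)
      = f i * g i - (T / n) * f i - (S / n) * g i + (S / n) * (T / n) := by
    intro i; ring
  rw [Finset.sum_congr rfl fun i _ => expand i]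
  simp only [Finset.sum_add_distrib, Finset.sum_sub_distrib, ← Finset.mul_sum,
    Finset.sum_const, Finset.card_univ, Fintype.card_fin, nsmul_eq_mul]
  rw [← hS, ← hT]
  field_simp
  ring

end aux

/-- Covariance perturbation bound: if two datasets of size `n` in the unit
Euclidean ball of `ℝ^d` differ in a single point, their empirical covariance
matrices (each computed about its own empirical mean) satisfy
`‖Σ̃ − Σ‖_F ≤ 2(3n+2)/(n(n−1))`. -/
theorem cov_perturbation {n d : ℕ} (hn : 2 ≤ n)
    (x x' : Fin n → EuclideanSpace ℝ (Fin d)) (i₀ : Fin n)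
    (hneighbor : ∀ i, i ≠ i₀ → x i = x' i)
    (hball : ∀ i, ‖x i‖ ≤ 1) (hball' : ∀ i, ‖x' i‖ ≤ 1) :
    Real.sqrt (∑ j, ∑ k, (empCov x' j k - empCov x j k) ^ 2)
      ≤ 2 * (3 * (n : ℝ) + 2) / ((n : ℝ) * ((n : ℝ) - 1)) := by
  classical
  have hn2 : (2 : ℝ) ≤ (n : ℝ) := by exact_mod_cast hn
  have hnpos : (0 : ℝ) < n := by linarith
  have hn0 : (n : ℝ) ≠ 0 := ne_of_gt hnpos
  have hn1 : (0 : ℝ) < (n : ℝ) - 1 := by linarith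
  set a : EuclideanSpace ℝ (Fin d) := x i₀ with ha
  set b : EuclideanSpace ℝ (Fin d) := x' i₀ with hb
  set m : EuclideanSpace ℝ (Fin d) := WithLp.toLp 2 (fun j => (∑ l, x l j) / (n : ℝ)) with hm
  set m' : EuclideanSpace ℝ (Fin d) := WithLp.toLp 2 (fun j => (∑ l, x' l j) / (n : ℝ)) with hm'
  set c : ℝ := 1 / ((n : ℝ) - 1) with hc
  have hna : ‖a‖ ≤ 1 := hball i₀
  have hnb : ‖b‖ ≤ 1 := hball' i₀
  have hmz : m = ((n : ℝ))⁻¹ • ∑ i, x i := by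
    ext j
    rw [PiLp.smul_apply, pilp_sum_apply]
    show (∑ l, x l j) / (n : ℝ) = _
    simp [div_eq_inv_mul]
  have hmz' : m' = ((n : ℝ))⁻¹ • ∑ i, x' i := by
    ext j
    rw [PiLp.smul_apply, pilp_sum_apply]
    show (∑ l, x' l j) / (n : ℝ) = _
    simp [div_eq_inv_mul]
  have hnm : ‖m‖ ≤ 1 := mean_norm_le hnpos x hball m hmz
  have hnm' : ‖m'‖ ≤ 1 := mean_norm_le hnpos x' hball' m' hmz'
  have hdiff_sum : ∀ j, (∑ l, x' l j) - (∑ l, x l j) = b j - a j := by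
    intro j
    rw [← Finset.sum_sub_distrib]
    rw [Finset.sum_eq_single i₀ (fun i _ h => by rw [hneighbor i h]; ring)
      (fun h => absurd (Finset.mem_univ i₀) h)]
  have hmm' : m' - m = ((n : ℝ))⁻¹ • (b - a) := by
    ext j
    rw [PiLp.sub_apply, PiLp.smul_apply, PiLp.sub_apply]
    show (∑ l, x' l j) / (n : ℝ) - (∑ l, x l j) / (n : ℝ) = ((n : ℝ))⁻¹ • (b j - a j)
    rw [smul_eq_mul, ← hdiff_sum j]
    field_simp
  have hnorm_mm' : ‖m' - m‖ ≤ 2 / (n : ℝ) := by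
    rw [hmm', norm_smul, Real.norm_eq_abs, abs_of_pos (by positivity)]
    have h2 : ‖b - a‖ ≤ 2 := by
      refine le_trans (norm_sub_le _ _) ?_
      linarith
    calc ((n : ℝ))⁻¹ * ‖b - a‖ ≤ ((n : ℝ))⁻¹ * 2 :=
          mul_le_mul_of_nonneg_left h2 (by positivity)
      _ = 2 / (n : ℝ) := by ring
  have entry : ∀ j k, empCov x' j k - empCov x j k
      = c * ((b j * b k - a j * a k)
          - (n : ℝ) * (m' j * m' k - m j * m k)) := by
    intro j k
    have e1 := centered_sum hn0 (fun l => x l j) (fun l => x l k)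
    have e2 := centered_sum hn0 (fun l => x' l j) (fun l => x' l k)
    have hprod : (∑ i, x' i j * x' i k) - (∑ i, x i j * x i k)
        = b j * b k - a j * a k := by
      rw [← Finset.sum_sub_distrib]
      rw [Finset.sum_eq_single i₀ (fun i _ h => by rw [hneighbor i h]; ring)
        (fun h => absurd (Finset.mem_univ i₀) h)]
    have hmj : m j = (∑ l, x l j) / (n : ℝ) := rfl
    have hmk : m k = (∑ l, x l k) / (n : ℝ) := rfl
    have hm'j : m' j = (∑ l, x' l j) / (n : ℝ) := rfl
    have hm'k : m' k = (∑ l, x' l k) / (n : ℝ) := rfl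
    unfold empCov
    rw [e1, e2, ← hc, ← mul_sub]
    congr 1
    have hS : (∑ l, x l j) * (∑ l, x l k) / (n : ℝ) = (n : ℝ) * (m j * m k) := by
      rw [hmj, hmk]; field_simp
    have hS' : (∑ l, x' l j) * (∑ l, x' l k) / (n : ℝ) = (n : ℝ) * (m' j * m' k) := by
      rw [hm'j, hm'k]; field_simp
    rw [hS, hS']
    linarith [hprod]
  set D : EuclideanSpace ℝ (Fin d × Fin d) :=
    WithLp.toLp 2 (fun p : Fin d × Fin d => empCov x' p.1 p.2 - empCov x p.1 p.2) with hD
  have hDdecomp : D = c • (rankOneE b b - rankOneE a a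
      - (n : ℝ) • (rankOneE m' (m' - m) + rankOneE (m' - m) m)) := by
    ext p
    show empCov x' p.1 p.2 - empCov x p.1 p.2 = _
    rw [PiLp.smul_apply, PiLp.sub_apply, PiLp.sub_apply, PiLp.smul_apply, PiLp.add_apply,
      rankOneE_apply, rankOneE_apply, rankOneE_apply, rankOneE_apply,
      PiLp.sub_apply, PiLp.sub_apply, entry p.1 p.2]
    simp only [smul_eq_mul]
    ring
  have hLHS : Real.sqrt (∑ j, ∑ k, (empCov x' j k - empCov x j k) ^ 2) = ‖D‖ := by
    rw [EuclideanSpace.norm_eq D]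
    congr 1
    rw [Fintype.sum_prod_type]
    refine Finset.sum_congr rfl fun j _ => Finset.sum_congr rfl fun k _ => ?_
    have : D (j, k) = empCov x' j k - empCov x j k := rfl
    rw [this, Real.norm_eq_abs, sq_abs]
  rw [hLHS]
  have hcnn : (0 : ℝ) ≤ c := by rw [hc]; positivity
  have hbound : ‖D‖ ≤ c * (1 + 1 + (n : ℝ) * (1 * (2 / n) + (2 / n) * 1)) := by
    rw [hDdecomp, norm_smul, Real.norm_eq_abs, abs_of_nonneg hcnn]
    refine mul_le_mul_of_nonneg_left ?_ hcnn
    calc ‖rankOneE b b - rankOneE a a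
          - (n : ℝ) • (rankOneE m' (m' - m) + rankOneE (m' - m) m)‖
        ≤ ‖rankOneE b b - rankOneE a a‖
            + ‖(n : ℝ) • (rankOneE m' (m' - m) + rankOneE (m' - m) m)‖ := norm_sub_le _ _
      _ ≤ (‖rankOneE b b‖ + ‖rankOneE a a‖)
            + (n : ℝ) * (‖rankOneE m' (m' - m)‖ + ‖rankOneE (m' - m) m‖) := by
          gcongr
          · exact norm_sub_le _ _
          · rw [norm_smul, Real.norm_eq_abs, abs_of_pos hnpos]
            exact mul_le_mul_of_nonneg_left (norm_add_le _ _) (le_of_lt hnpos)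
      _ ≤ (1 * 1 + 1 * 1) + (n : ℝ) * (1 * (2 / n) + (2 / n) * 1) := by
          have hb2 : ‖rankOneE b b‖ ≤ 1 * 1 := by
            rw [rankOneE_norm]
            exact mul_le_mul hnb hnb (norm_nonneg _) zero_le_one
          have ha2 : ‖rankOneE a a‖ ≤ 1 * 1 := by
            rw [rankOneE_norm]
            exact mul_le_mul hna hna (norm_nonneg _) zero_le_one
          have hm1 : ‖rankOneE m' (m' - m)‖ ≤ 1 * (2 / n) := by
            rw [rankOneE_norm]
            exact mul_le_mul hnm' hnorm_mm' (norm_nonneg _) zero_le_one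
          have hm2 : ‖rankOneE (m' - m) m‖ ≤ (2 / n) * 1 := by
            rw [rankOneE_norm]
            exact mul_le_mul hnorm_mm' hnm (norm_nonneg _) (by positivity)
          gcongr
      _ = 1 + 1 + (n : ℝ) * (1 * (2 / n) + (2 / n) * 1) := by ring
  refine le_trans hbound ?_
  rw [hc]
  have hrw : 1 / ((n : ℝ) - 1) * (1 + 1 + (n : ℝ) * (1 * (2 / n) + (2 / n) * 1))
      = 6 / ((n : ℝ) - 1) := by
    field_simp
    ring
  rw [hrw, div_le_div_iff₀ hn1 (by positivity)]
  nlinarith [hnpos, hn1]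
end
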